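/- Let d, M, N, K ∈ ℕ with K ≥ 2N + 6. For any two elements (W₀, Y₀) and (W₁, Y₁) of the constraint set 𝒰_K^N (discrete measures with K atoms satisfying the N moment constraints, the normalization constraint, and the inequality constraint Σ_k w_k ϑ(X^k) ≤ A), there exists a continuous piecewise-linear map ψ : [0,1] → 𝒰_K^N with ψ(0) = (W₀, Y₀), ψ(1) = (W₁, Y₁), such that t ↦ ℐ(ψ(t)) is monotone, where ℐ(W,Y) = Σ_{k=1}^K w_k c(X^k). -/

import Mathlib

open Finset Set Relation

namespace MCOTPath

/-- monotone transport along a step-monotone sequence up to `L` -/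
lemma amono (L : ℕ) (a : ℕ → ℝ) (ha : ∀ j, j + 1 ≤ L → a j ≤ a (j + 1)) :
    ∀ v, v ≤ L → ∀ u, u ≤ v → a u ≤ a v := by
  intro v
  induction v with
  | zero => intro _ u hu; simp [Nat.le_zero.mp hu]
  | succ v ih =>
    intro hv u hu
    rcases Nat.lt_succ_iff_lt_or_eq.mp (Nat.lt_succ_of_le hu) with h | h
    · exact le_trans (ih (by omega) u (by omega)) (ha v (by omega))
    · simp [h]

/-- canonical decomposition of `t ∈ [0,1]` as `(j+s)/L` -/
lemma decomp (L : ℕ) (hL : 0 < L) {t : ℝ} (ht : t ∈ Icc (0:ℝ) 1) :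
    let j := min (⌊t * L⌋₊) (L - 1)
    let s := t * L - j
    j < L ∧ s ∈ Icc (0:ℝ) 1 ∧ t = ((j : ℝ) + s) / L := by
  intro j s
  obtain ⟨ht0, ht1⟩ := ht
  have hLR : (0:ℝ) < L := by exact_mod_cast hL
  have htL0 : 0 ≤ t * L := by positivity
  have hjle : (j : ℝ) ≤ t * L := by
    have : (j : ℝ) ≤ (⌊t * L⌋₊ : ℝ) := by exact_mod_cast Nat.min_le_left _ _
    exact this.trans (Nat.floor_le htL0)
  have hjlt : j < L := by omega
  refine ⟨hjlt, ⟨by simpa [s] using hjle, ?_⟩, ?_⟩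
  · -- s ≤ 1
    by_cases hc : ⌊t * L⌋₊ ≤ L - 1
    · have hj : j = ⌊t * L⌋₊ := min_eq_left hc
      have := Nat.lt_floor_add_one (t * L)
      simp only [s, hj]
      linarith
    · have hge : L ≤ ⌊t * L⌋₊ := by omega
      have hj : j = L - 1 := min_eq_right (by omega)
      have hcast : (j : ℝ) = (L : ℝ) - 1 := by
        rw [hj]; push_cast [Nat.cast_sub hL]; ring
      have : t * L ≤ L := by nlinarith
      simp only [s, hcast]
      linarith
  · rw [eq_div_iff (ne_of_gt hLR)]; simp only [s]; ring


lemma pl_mono (L : ℕ) (hL : 0 < L) (a : ℕ → ℝ) (F : ℝ → ℝ)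
    (ha : ∀ j, j + 1 ≤ L → a j ≤ a (j + 1))
    (hF : ∀ j, j < L → ∀ s ∈ Icc (0:ℝ) 1, F (((j : ℝ) + s) / L) = (1 - s) * a j + s * a (j + 1)) :
    MonotoneOn F (Icc (0:ℝ) 1) := by
  intro t ht t' ht' htt'
  obtain ⟨hj, hs, hts⟩ := decomp L hL ht
  obtain ⟨hj', hs', hts'⟩ := decomp L hL ht'
  set j := min (⌊t * L⌋₊) (L - 1) with hjdef
  set j' := min (⌊t' * L⌋₊) (L - 1) with hj'def
  set s := t * L - (j : ℝ) with hsdef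
  set s' := t' * L - (j' : ℝ) with hs'def
  have hjj' : j ≤ j' := by
    have : ⌊t * L⌋₊ ≤ ⌊t' * L⌋₊ := by
      apply Nat.floor_le_floor
      have hLR : (0:ℝ) ≤ L := by positivity
      nlinarith
    omega
  have e1 : F t = (1 - s) * a j + s * a (j + 1) := by rw [hts]; exact hF j hj s hs
  have e2 : F t' = (1 - s') * a j' + s' * a (j' + 1) := by rw [hts']; exact hF j' hj' s' hs'
  obtain ⟨hs0, hs1⟩ := hs
  obtain ⟨hs0', hs1'⟩ := hs'
  rcases eq_or_lt_of_le hjj' with heq | hlt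
  · -- same segment
    have hss' : s ≤ s' := by
      have : (j : ℝ) = (j' : ℝ) := by exact_mod_cast heq
      have hLR : (0:ℝ) ≤ L := by positivity
      simp only [hsdef, hs'def, ← this]
      nlinarith
    have haj : a j ≤ a (j + 1) := ha j hj
    rw [e1, e2, ← heq]
    nlinarith
  · -- different segments
    have h1 : F t ≤ a (j + 1) := by rw [e1]; nlinarith [ha j hj]
    have h2 : a (j + 1) ≤ a j' := amono L a ha j' (by omega) (j + 1) (by omega)
    have h3 : a j' ≤ F t' := by rw [e2]; nlinarith [ha j' hj']
    linarith


variable {E : Type*} [AddCommGroup E] [Module ℝ E] [TopologicalSpace E]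
  [IsTopologicalAddGroup E] [ContinuousSMul ℝ E]

/-- the clamp function -/
noncomputable def clamp (x : ℝ) : ℝ := max 0 (min 1 x)

lemma clamp_continuous : Continuous clamp :=
  continuous_const.max (continuous_const.min continuous_id)

lemma clamp_of_le_zero {x : ℝ} (h : x ≤ 0) : clamp x = 0 :=
  max_eq_left ((min_le_right 1 x).trans h)

lemma clamp_of_one_le {x : ℝ} (h : 1 ≤ x) : clamp x = 1 := by
  rw [clamp, min_eq_left h]; exact max_eq_right zero_le_one

lemma clamp_of_mem {x : ℝ} (h0 : 0 ≤ x) (h1 : x ≤ 1) : clamp x = x := by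
  rw [clamp, min_eq_right h1]; exact max_eq_right h0

/-- Assemble a polygonal path from a finite sequence of nodes. -/
theorem assemble (U : Set E) (I : E → ℝ) (L : ℕ) (hL : 0 < L) (f : Fin (L + 1) → E)
    (hseg : ∀ i : Fin L, ∀ s ∈ Icc (0:ℝ) 1,
      ((1 - s) • f i.castSucc + s • f i.succ) ∈ U ∧
      I ((1 - s) • f i.castSucc + s • f i.succ)
        = (1 - s) * I (f i.castSucc) + s * I (f i.succ))
    (hm : (∀ i : Fin L, I (f i.castSucc) ≤ I (f i.succ)) ∨
          (∀ i : Fin L, I (f i.succ) ≤ I (f i.castSucc))) :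
    ∃ ψ : ℝ → E,
      ContinuousOn ψ (Icc 0 1) ∧
      ψ 0 = f 0 ∧ ψ 1 = f (Fin.last L) ∧
      (∀ t ∈ Icc (0:ℝ) 1, ψ t ∈ U) ∧
      (∃ (L' : ℕ) (τ : Fin (L' + 1) → ℝ), Monotone τ ∧ τ 0 = 0 ∧ τ (Fin.last L') = 1 ∧
        ∀ i : Fin L', ∀ s ∈ Icc (0:ℝ) 1,
          ψ ((1 - s) * τ i.castSucc + s * τ i.succ)
            = (1 - s) • ψ (τ i.castSucc) + s • ψ (τ i.succ)) ∧
      (MonotoneOn (fun t => I (ψ t)) (Icc 0 1) ∨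
        AntitoneOn (fun t => I (ψ t)) (Icc 0 1)) := by
  have hLR : (0:ℝ) < L := by exact_mod_cast hL
  -- the node sequence as a function on ℕ
  set g : ℕ → E := fun j => f ⟨min j L, by omega⟩ with hg
  have hgcast : ∀ (j : ℕ) (hj : j < L), g j = f (⟨j, hj⟩ : Fin L).castSucc := by
    intro j hj
    have : min j L = j := min_eq_left (le_of_lt hj)
    simp only [hg]
    congr 1
    exact Fin.ext (by simp [this])
  have hgsucc : ∀ (j : ℕ) (hj : j < L), g (j + 1) = f (⟨j, hj⟩ : Fin L).succ := by
    intro j hj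
    have : min (j + 1) L = j + 1 := min_eq_left hj
    simp only [hg]
    congr 1
    exact Fin.ext (by simp [this])
  have hg0 : g 0 = f 0 := by
    simp only [hg]
    congr 1
  have hgL : g L = f (Fin.last L) := by
    simp only [hg]
    congr 1
    exact Fin.ext (by simp)
  -- restated segment hypothesis
  have hseg' : ∀ j, j < L → ∀ s ∈ Icc (0:ℝ) 1,
      ((1 - s) • g j + s • g (j + 1)) ∈ U ∧
      I ((1 - s) • g j + s • g (j + 1)) = (1 - s) * I (g j) + s * I (g (j + 1)) := by
    intro j hj s hs
    rw [hgcast j hj, hgsucc j hj]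
    exact hseg ⟨j, hj⟩ s hs
  -- definition of ψ
  set ψ : ℝ → E := fun t =>
    g 0 + ∑ j ∈ Finset.range L, clamp (t * L - j) • (g (j + 1) - g j) with hψ
  -- key representation lemma
  have KL : ∀ j, j < L → ∀ s ∈ Icc (0:ℝ) 1,
      ψ (((j : ℝ) + s) / L) = (1 - s) • g j + s • g (j + 1) := by
    intro j hj s hs
    obtain ⟨hs0, hs1⟩ := hs
    have harg : ((j : ℝ) + s) / L * L = (j : ℝ) + s := by field_simp
    have hsplit : Finset.range L = Finset.range (j + 1) ∪ Finset.Ico (j + 1) L := by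
      rw [Finset.range_eq_Ico, Finset.range_eq_Ico]
      exact (Finset.Ico_union_Ico_eq_Ico (a := 0) (b := j + 1) (c := L) (by omega) (by omega)).symm
    have hdisj : Disjoint (Finset.range (j + 1)) (Finset.Ico (j + 1) L) := by
      simp [Finset.disjoint_left, Finset.mem_Ico]
      omega
    rw [hψ]
    simp only [harg]
    rw [hsplit, Finset.sum_union hdisj]
    have hzero : ∑ k ∈ Finset.Ico (j + 1) L, clamp ((j : ℝ) + s - k) • (g (k + 1) - g k) = 0 := by
      apply Finset.sum_eq_zero
      intro k hk
      have hk' : j + 1 ≤ k := (Finset.mem_Ico.mp hk).1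
      have : ((j : ℝ) + s - k) ≤ 0 := by
        have : (j : ℝ) + 1 ≤ (k : ℝ) := by exact_mod_cast hk'
        linarith
      rw [clamp_of_le_zero this, zero_smul]
    rw [hzero, add_zero, Finset.sum_range_succ]
    have hjj : ((j : ℝ) + s - j) = s := by ring
    rw [hjj, clamp_of_mem hs0 hs1]
    have hones : ∑ k ∈ Finset.range j, clamp ((j : ℝ) + s - k) • (g (k + 1) - g k)
        = ∑ k ∈ Finset.range j, (g (k + 1) - g k) := by
      apply Finset.sum_congr rfl
      intro k hk
      have hk' : k < j := Finset.mem_range.mp hk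
      have : (1 : ℝ) ≤ (j : ℝ) + s - k := by
        have : (k : ℝ) + 1 ≤ (j : ℝ) := by exact_mod_cast hk'
        linarith
      rw [clamp_of_one_le this, one_smul]
    rw [hones, Finset.sum_range_sub g j]
    rw [smul_sub, sub_smul, one_smul]
    abel
  -- continuity
  have hcont : Continuous ψ := by
    apply continuous_const.add
    apply continuous_finset_sum
    intro j _
    exact ((clamp_continuous.comp ((continuous_id.mul continuous_const).sub
      continuous_const)).smul continuous_const)
  have hψ0 : ψ 0 = f 0 := by
    have := KL 0 hL 0 (by constructor <;> norm_num)
    simp only [Nat.cast_zero, add_zero, zero_div] at this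
    rw [this]
    simp [hg0]
  have hψ1 : ψ 1 = f (Fin.last L) := by
    have h1 : ((L - 1 : ℕ) : ℝ) + 1 = (L : ℝ) := by
      push_cast [Nat.cast_sub hL]; ring
    have := KL (L - 1) (by omega) 1 (by constructor <;> norm_num)
    rw [h1, div_self (ne_of_gt hLR)] at this
    rw [this]
    have : L - 1 + 1 = L := by omega
    rw [this, hgL]
    simp
  refine ⟨ψ, hcont.continuousOn, hψ0, hψ1, ?_, ?_, ?_⟩
  · -- membership
    intro t ht
    obtain ⟨hj, hs, hts⟩ := decomp L hL ht
    rw [hts, KL _ hj _ hs]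
    exact (hseg' _ hj _ hs).1
  · -- polygonal structure
    refine ⟨L, fun i => (i : ℕ) / L, ?_, by simp, by simp [div_self (ne_of_gt hLR)], ?_⟩
    · intro i j hij
      have h : ((i : ℕ) : ℝ) ≤ ((j : ℕ) : ℝ) := Nat.cast_le.mpr (Fin.le_def.mp hij)
      show ((i : ℕ) : ℝ) / L ≤ ((j : ℕ) : ℝ) / L
      gcongr
    · intro i s hs
      obtain ⟨hs0, hs1⟩ := hs
      have hKs := KL (i : ℕ) i.2 s ⟨hs0, hs1⟩
      have hK0 := KL (i : ℕ) i.2 0 ⟨le_refl 0, zero_le_one⟩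
      have hK1 := KL (i : ℕ) i.2 1 ⟨zero_le_one, le_refl 1⟩
      simp only [sub_zero, one_smul, zero_smul, add_zero, sub_self, zero_add] at hK0 hK1
      simp only [Fin.coe_castSucc, Fin.val_succ, Nat.cast_add, Nat.cast_one]
      rw [show (1 - s) * ((((i : ℕ) : ℝ)) / L) + s * (((((i : ℕ) : ℝ)) + 1) / L)
          = (((i : ℕ) : ℝ) + s) / L by field_simp; ring, hKs, hK0, hK1]
  · -- monotonicity
    have hFrep : ∀ j, j < L → ∀ s ∈ Icc (0:ℝ) 1,
        I (ψ (((j : ℝ) + s) / L)) = (1 - s) * I (g j) + s * I (g (j + 1)) := by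
      intro j hj s hs
      rw [KL j hj s hs]
      exact (hseg' j hj s hs).2
    rcases hm with hmono | hanti
    · left
      apply pl_mono L hL (fun j => I (g j)) (fun t => I (ψ t))
      · intro j hj
        rw [hgcast j hj, hgsucc j hj]
        exact hmono ⟨j, hj⟩
      · exact hFrep
    · right
      have hpm : MonotoneOn (fun t => -I (ψ t)) (Icc (0:ℝ) 1) := by
        apply pl_mono L hL (fun j => -I (g j)) (fun t => -I (ψ t))
        · intro j hj
          rw [hgcast j hj, hgsucc j hj]
          exact neg_le_neg (hanti ⟨j, hj⟩)
        · intro j hj s hs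
          have h := hFrep j hj s hs
          show -I (ψ (((j : ℝ) + s) / L)) = _
          rw [h]
          ring
      intro x hx y hy hxy
      have := hpm hx hy hxy
      dsimp only at this
      linarith


section Seq
variable {X : Type*} {r : X → X → Prop}

lemma snoc_step {n : ℕ} {f : Fin (n + 1) → X} {a b c : X}
    (h0 : f 0 = a) (hl : f (Fin.last n) = b)
    (hstep : ∀ i : Fin n, r (f i.castSucc) (f i.succ)) (hbc : r b c) :
    ∃ f' : Fin (n + 2) → X, f' 0 = a ∧ f' (Fin.last (n + 1)) = c ∧
      ∀ i : Fin (n + 1), r (f' i.castSucc) (f' i.succ) := by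
  refine ⟨Fin.snoc f c, ?_, ?_, ?_⟩
  · rw [show (0 : Fin (n + 2)) = Fin.castSucc 0 by simp, Fin.snoc_castSucc, h0]
  · rw [Fin.snoc_last]
  · intro i
    induction i using Fin.lastCases with
    | last =>
      rw [Fin.succ_last, Fin.snoc_last, Fin.snoc_castSucc, hl]
      exact hbc
    | cast j =>
      rw [Fin.succ_castSucc, Fin.snoc_castSucc, Fin.snoc_castSucc]
      exact hstep j

lemma rtg_seq {a b : X} (h : Relation.ReflTransGen r a b) :
    ∃ (n : ℕ) (f : Fin (n + 1) → X), f 0 = a ∧ f (Fin.last n) = b ∧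
      ∀ i : Fin n, r (f i.castSucc) (f i.succ) := by
  induction h with
  | refl => exact ⟨0, fun _ => a, rfl, rfl, fun i => i.elim0⟩
  | tail _ hbc ih =>
    obtain ⟨n, f, h0, hl, hstep⟩ := ih
    obtain ⟨f', h0', hl', hstep'⟩ := snoc_step h0 hl hstep hbc
    exact ⟨n + 1, f', h0', hl', hstep'⟩

end Seq


section Concrete

variable {K N : ℕ} {α : Type*} [AddCommGroup α] [Module ℝ α]

/-- the feasibility predicate -/
def okU (ϑ : α → ℝ) (φ : Fin N → α → ℝ) (μm : Fin N → ℝ) (A : ℝ)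
    (p : (Fin K → ℝ) × (Fin K → α)) : Prop :=
  (∀ k, 0 ≤ p.1 k) ∧ (∑ k, p.1 k = 1) ∧ (∑ k, p.1 k * ϑ (p.2 k) ≤ A) ∧
    ∀ n, ∑ k, p.1 k * φ n (p.2 k) = μm n

/-- the cost functional -/
def cost (c : α → ℝ) (p : (Fin K → ℝ) × (Fin K → α)) : ℝ := ∑ k, p.1 k * c (p.2 k)

variable (c ϑ : α → ℝ) (φ : Fin N → α → ℝ) (μm : Fin N → ℝ) (A : ℝ)

/-- valid segment: stays feasible and cost is affine along it -/
def Seg (p q : (Fin K → ℝ) × (Fin K → α)) : Prop :=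
  ∀ s ∈ Icc (0:ℝ) 1,
    okU ϑ φ μm A ((1 - s) • p + s • q) ∧
    cost c ((1 - s) • p + s • q) = (1 - s) * cost c p + s * cost c q

/-- valid segment with equal cost at endpoints -/
def SegEq (p q : (Fin K → ℝ) × (Fin K → α)) : Prop :=
  Seg c ϑ φ μm A p q ∧ cost c q = cost c p

lemma comb_fst (p q : (Fin K → ℝ) × (Fin K → α)) (s : ℝ) (k : Fin K) :
    ((1 - s) • p + s • q).1 k = (1 - s) * p.1 k + s * q.1 k := by
  simp [Prod.smul_fst, Prod.fst_add]

lemma comb_snd (p q : (Fin K → ℝ) × (Fin K → α)) (s : ℝ) (k : Fin K) :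
    ((1 - s) • p + s • q).2 k = (1 - s) • p.2 k + s • q.2 k := by
  simp [Prod.smul_snd, Prod.snd_add]

lemma comb_self (x : α) (s : ℝ) : (1 - s) • x + s • x = x := by
  rw [← add_smul, sub_add_cancel, one_smul]

/-- Lemma A : any segment between feasible points with the same positions is valid -/
lemma segW {p q : (Fin K → ℝ) × (Fin K → α)}
    (hp : okU ϑ φ μm A p) (hq : okU ϑ φ μm A q) (h2 : p.2 = q.2) :
    Seg c ϑ φ μm A p q := by
  intro s hs
  obtain ⟨hs0, hs1⟩ := hs
  have hpos : ∀ k, ((1 - s) • p + s • q).2 k = p.2 k := by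
    intro k
    rw [comb_snd, ← h2, comb_self]
  have hsum : ∀ f : α → ℝ,
      ∑ k, ((1 - s) • p + s • q).1 k * f (((1 - s) • p + s • q).2 k)
        = (1 - s) * ∑ k, p.1 k * f (p.2 k) + s * ∑ k, q.1 k * f (q.2 k) := by
    intro f
    rw [Finset.mul_sum, Finset.mul_sum, ← Finset.sum_add_distrib]
    refine Finset.sum_congr rfl fun k _ => ?_
    rw [comb_fst, hpos k, ← h2]
    ring
  have hmass : ∑ k, ((1 - s) • p + s • q).1 k = 1 := by
    have := hsum (fun _ => (1:ℝ))
    simp only [mul_one] at this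
    rw [this, hp.2.1, hq.2.1]
    ring
  refine ⟨⟨?_, hmass, ?_, ?_⟩, ?_⟩
  · intro k
    rw [comb_fst]
    have := hp.1 k
    have := hq.1 k
    nlinarith
  · rw [hsum ϑ]
    nlinarith [hp.2.2.1, hq.2.2.1]
  · intro n
    rw [hsum (φ n), hp.2.2.2 n, hq.2.2.2 n]
    ring
  · rw [cost, hsum c]
    rfl

/-- Lemma B : moving positions of zero-weight atoms -/
lemma segX {p q : (Fin K → ℝ) × (Fin K → α)}
    (hp : okU ϑ φ μm A p) (h1 : p.1 = q.1)
    (hfix : ∀ k, p.1 k ≠ 0 → p.2 k = q.2 k) :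
    SegEq c ϑ φ μm A p q ∧ okU ϑ φ μm A q := by
  have hsum : ∀ s : ℝ, ∀ f : α → ℝ,
      ∑ k, ((1 - s) • p + s • q).1 k * f (((1 - s) • p + s • q).2 k)
        = ∑ k, p.1 k * f (p.2 k) := by
    intro s f
    refine Finset.sum_congr rfl fun k _ => ?_
    rw [comb_fst, ← h1]
    by_cases hk : p.1 k = 0
    · rw [hk]; ring
    · rw [comb_snd, ← hfix k hk, comb_self]
      ring
  have hsumq : ∀ f : α → ℝ, ∑ k, q.1 k * f (q.2 k) = ∑ k, p.1 k * f (p.2 k) := by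
    intro f
    have := hsum 1 f
    simp only [sub_self, zero_smul, one_smul, zero_add] at this
    exact this
  have hsumq1 : ∑ k, q.1 k = 1 := by
    have := hsumq (fun _ => (1:ℝ))
    simp only [mul_one] at this
    rw [this, hp.2.1]
  have hq : okU ϑ φ μm A q := by
    refine ⟨fun k => ?_, hsumq1, ?_, fun n => ?_⟩
    · rw [← h1]; exact hp.1 k
    · rw [hsumq ϑ]; exact hp.2.2.1
    · rw [hsumq (φ n)]; exact hp.2.2.2 n
  have hcq : cost c q = cost c p := hsumq c
  refine ⟨⟨fun s hs => ?_, hcq⟩, hq⟩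
  have hmass : ∑ k, ((1 - s) • p + s • q).1 k = 1 := by
    have := hsum s (fun _ => (1:ℝ))
    simp only [mul_one] at this
    rw [this, hp.2.1]
  obtain ⟨hs0, hs1⟩ := hs
  refine ⟨⟨?_, hmass, ?_, ?_⟩, ?_⟩
  · intro k
    rw [comb_fst, ← h1]
    nlinarith [hp.1 k]
  · rw [hsum s ϑ]; exact hp.2.2.1
  · intro n
    rw [hsum s (φ n)]; exact hp.2.2.2 n
  · rw [cost, hsum s c, hcq]
    show cost c p = _
    ring


open scoped Classical in
/-- support of a weight vector -/
noncomputable def wsupp (w : Fin K → ℝ) : Finset (Fin K) :=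
  Finset.univ.filter (fun k => w k ≠ 0)

open scoped Classical in
lemma mem_wsupp {w : Fin K → ℝ} {k : Fin K} : k ∈ wsupp w ↔ w k ≠ 0 := by
  simp [wsupp]

/-- difference-of-sums identity when weights differ on two indices only -/
lemma sum_two_diff (f : Fin K → ℝ) {w w' : Fin K → ℝ} {i j : Fin K} (hij : i ≠ j)
    (hout : ∀ k, k ≠ i → k ≠ j → w' k = w k)
    (hkey : (w' i - w i) * f i + (w' j - w j) * f j = 0) :
    ∑ k, w' k * f k = ∑ k, w k * f k := by
  have h : ∑ k, (w' k - w k) * f k = 0 := by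
    rw [← Finset.sum_subset (Finset.subset_univ ({i, j} : Finset (Fin K)))]
    · rw [Finset.sum_pair hij, hkey]
    · intro k _ hk
      simp only [Finset.mem_insert, Finset.mem_singleton, not_or] at hk
      rw [hout k hk.1 hk.2]
      ring
  have h2 : ∑ k, (w' k * f k - w k * f k) = 0 := by
    rw [← h]
    exact Finset.sum_congr rfl fun k _ => by ring
  rw [Finset.sum_sub_distrib] at h2
  linarith

/-- transfer the weight of atom `i` to an empty slot `j` holding the same position -/
lemma seg_transfer {p q : (Fin K → ℝ) × (Fin K → α)} {i j : Fin K}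
    (hp : okU ϑ φ μm A p) (hij : i ≠ j) (hj : p.1 j = 0) (hX : p.2 i = p.2 j)
    (hqdef : q = (Function.update (Function.update p.1 i 0) j (p.1 i), p.2)) :
    SegEq c ϑ φ μm A p q ∧ okU ϑ φ μm A q ∧
      (∀ k, k ≠ i → k ≠ j → q.1 k = p.1 k) ∧ q.1 i = 0 ∧ q.1 j = p.1 i := by
  have hq1 : q.1 = Function.update (Function.update p.1 i 0) j (p.1 i) := by rw [hqdef]
  have hq2 : q.2 = p.2 := by rw [hqdef]
  have hqi : q.1 i = 0 := by
    rw [hq1, Function.update_of_ne hij, Function.update_self]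
  have hqj : q.1 j = p.1 i := by
    rw [hq1, Function.update_self]
  have hout : ∀ k, k ≠ i → k ≠ j → q.1 k = p.1 k := by
    intro k hki hkj
    rw [hq1, Function.update_of_ne hkj, Function.update_of_ne hki]
  have hsum : ∀ f : α → ℝ, ∑ k, q.1 k * f (q.2 k) = ∑ k, p.1 k * f (p.2 k) := by
    intro f
    simp only [hq2]
    apply sum_two_diff (fun k => f (p.2 k)) hij hout
    rw [hqi, hqj, hj, hX]
    ring
  have hq : okU ϑ φ μm A q := by
    refine ⟨fun k => ?_, ?_, ?_, fun n => ?_⟩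
    · by_cases hki : k = i
      · rw [hki, hqi]
      · by_cases hkj : k = j
        · rw [hkj, hqj]; exact hp.1 i
        · rw [hout k hki hkj]; exact hp.1 k
    · have := hsum (fun _ => (1:ℝ))
      simp only [mul_one] at this
      rw [this, hp.2.1]
    · rw [hsum ϑ]; exact hp.2.2.1
    · rw [hsum (φ n)]; exact hp.2.2.2 n
  have hcq : cost c q = cost c p := hsum c
  refine ⟨⟨?_, hcq⟩, hq, hout, hqi, hqj⟩
  have hseg := segW c ϑ φ μm A hp hq hq2.symm
  intro s hs
  refine ⟨(hseg s hs).1, ?_⟩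
  rw [(hseg s hs).2, hcq]


lemma psum_fst {ι A B : Type*} [AddCommMonoid A] [AddCommMonoid B]
    (s : Finset ι) (f : ι → A × B) : (∑ i ∈ s, f i).1 = ∑ i ∈ s, (f i).1 :=
  map_sum (AddMonoidHom.fst A B) f s

lemma psum_snd {ι A B : Type*} [AddCommMonoid A] [AddCommMonoid B]
    (s : Finset ι) (f : ι → A × B) : (∑ i ∈ s, f i).2 = ∑ i ∈ s, (f i).2 :=
  map_sum (AddMonoidHom.snd A B) f s

open scoped Classical in
/-- existence of a nontrivial linear relation supported on the support,
killing the moments, the mass and the cost -/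
lemma exists_relation (X : Fin K → α) (w : Fin K → ℝ)
    (hcard : N + 2 < (wsupp w).card) :
    ∃ V : Fin K → ℝ, (∃ k, V k ≠ 0) ∧ (∀ k, w k = 0 → V k = 0) ∧
      (∑ k, V k = 0) ∧ (∑ k, V k * c (X k) = 0) ∧ (∀ n, ∑ k, V k * φ n (X k) = 0) := by
  set S := wsupp w with hS
  set vec : Fin K → ((Fin N → ℝ) × ℝ × ℝ) :=
    fun k => (fun n => φ n (X k), (1:ℝ), c (X k)) with hvec
  have hfr : Module.finrank ℝ ((Fin N → ℝ) × ℝ × ℝ) = N + 2 := by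
    simp [Module.finrank_prod, Module.finrank_pi, Module.finrank_self]
  have hnli : ¬ LinearIndependent ℝ (fun i : ↥S => vec (i : Fin K)) := by
    intro h
    have hle := h.fintype_card_le_finrank
    rw [Fintype.card_coe, hfr] at hle
    omega
  obtain ⟨g, hg0, i₀, hgi₀⟩ := Fintype.not_linearIndependent_iff.mp hnli
  set V : Fin K → ℝ := fun k => if h : k ∈ S then g ⟨k, h⟩ else 0 with hV
  have hVmem : ∀ (k : Fin K) (h : k ∈ S), V k = g ⟨k, h⟩ := by
    intro k h; simp [hV, h]
  have hVout : ∀ k, k ∉ S → V k = 0 := by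
    intro k h; simp [hV, h]
  have hVsum : ∑ k, V k • vec k = 0 := by
    rw [← Finset.sum_subset (Finset.subset_univ S)]
    · rw [← Finset.sum_coe_sort S (fun k => V k • vec k)]
      rw [← hg0]
      refine Finset.sum_congr rfl fun i _ => ?_
      rw [hVmem i i.2]
    · intro k _ hk
      rw [hVout k hk, zero_smul]
  refine ⟨V, ⟨i₀, ?_⟩, ?_, ?_, ?_, ?_⟩
  · rw [hVmem i₀ i₀.2]
    simpa using hgi₀
  · intro k hk
    apply hVout
    rw [hS, mem_wsupp]
    simpa using hk
  · have := congrArg (fun x : (Fin N → ℝ) × ℝ × ℝ => x.2.1) hVsum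
    simpa [hvec, psum_fst, psum_snd, Prod.smul_fst, Prod.smul_snd, smul_eq_mul, mul_one] using this
  · have := congrArg (fun x : (Fin N → ℝ) × ℝ × ℝ => x.2.2) hVsum
    simpa [psum_fst, psum_snd, Prod.smul_fst, Prod.smul_snd, smul_eq_mul] using this
  · intro n
    have := congrArg (fun x : (Fin N → ℝ) × ℝ × ℝ => x.1 n) hVsum
    simpa [psum_fst, Prod.smul_fst, Finset.sum_apply, smul_eq_mul] using this


/-- one Carathéodory reduction step -/
lemma reduce_step {p : (Fin K → ℝ) × (Fin K → α)}
    (hp : okU ϑ φ μm A p) (hcard : N + 2 < (wsupp p.1).card) :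
    ∃ q, SegEq c ϑ φ μm A p q ∧ okU ϑ φ μm A q ∧ q.2 = p.2 ∧
      wsupp q.1 ⊆ wsupp p.1 ∧ (wsupp q.1).card < (wsupp p.1).card := by
  obtain ⟨V₀, ⟨k₀, hk₀⟩, hV₀supp, hV₀1, hV₀c, hV₀φ⟩ := exists_relation c φ p.2 p.1 hcard
  -- choose sign so that the ϑ-sum does not increase
  obtain ⟨V, ⟨k₁, hk₁⟩, hVsupp, hV1, hVc, hVφ, hVϑ⟩ :
      ∃ V : Fin K → ℝ, (∃ k, V k ≠ 0) ∧ (∀ k, p.1 k = 0 → V k = 0) ∧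
        (∑ k, V k = 0) ∧ (∑ k, V k * c (p.2 k) = 0) ∧
        (∀ n, ∑ k, V k * φ n (p.2 k) = 0) ∧ (∑ k, V k * ϑ (p.2 k) ≤ 0) := by
    rcases le_or_gt (∑ k, V₀ k * ϑ (p.2 k)) 0 with h | h
    · exact ⟨V₀, ⟨k₀, hk₀⟩, hV₀supp, hV₀1, hV₀c, hV₀φ, h⟩
    · refine ⟨fun k => -V₀ k, ⟨k₀, by simpa using hk₀⟩, fun k hk => by simp [hV₀supp k hk], ?_, ?_, ?_, ?_⟩
      · simp [Finset.sum_neg_distrib, hV₀1]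
      · simp only [neg_mul]
        rw [Finset.sum_neg_distrib, hV₀c, neg_zero]
      · intro n
        simp only [neg_mul]
        rw [Finset.sum_neg_distrib, hV₀φ n, neg_zero]
      · simp only [neg_mul]
        rw [Finset.sum_neg_distrib]
        linarith
  -- there is a strictly negative coordinate
  have hex : ∃ k, V k < 0 := by
    by_contra h
    push_neg at h
    have : ∀ k ∈ Finset.univ, V k = 0 :=
      (Finset.sum_eq_zero_iff_of_nonneg (fun k _ => h k)).mp hV1
    exact hk₁ (this k₁ (Finset.mem_univ k₁))
  classical
  set neg : Finset (Fin K) := Finset.univ.filter (fun k => V k < 0) with hneg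
  have hnegne : neg.Nonempty := by
    obtain ⟨k, hk⟩ := hex
    exact ⟨k, by simp [hneg, hk]⟩
  obtain ⟨m, hmneg, hmin⟩ := Finset.exists_min_image neg (fun k => p.1 k / (-V k)) hnegne
  have hVm : V m < 0 := by
    have := hmneg
    simp [hneg] at this
    exact this
  set t : ℝ := p.1 m / (-V m) with ht
  have ht0 : 0 ≤ t := div_nonneg (hp.1 m) (by linarith)
  set w' : Fin K → ℝ := fun k => p.1 k + t * V k with hw'
  have hnem : (-V m) ≠ 0 := by intro h; exact absurd hVm (by linarith)
  have htVm : t * V m = -p.1 m := by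
    rw [ht]
    calc p.1 m / -V m * V m = -(p.1 m / -V m * -V m) := by ring
      _ = -p.1 m := by rw [div_mul_cancel₀ _ hnem]
  have hw'm : w' m = 0 := by
    show p.1 m + t * V m = 0
    rw [htVm]
    ring
  have hw'nonneg : ∀ k, 0 ≤ w' k := by
    intro k
    rcases le_or_gt 0 (V k) with h | h
    · have : 0 ≤ t * V k := mul_nonneg ht0 h
      simp only [hw']
      linarith [hp.1 k]
    · have hkneg : k ∈ neg := by simp [hneg, h]
      have := hmin k hkneg
      have hnek : (-V k) ≠ 0 := by intro hh; exact absurd h (by linarith)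
      have h1 : t * (-V k) ≤ p.1 k := by
        calc t * (-V k) ≤ p.1 k / (-V k) * (-V k) :=
              mul_le_mul_of_nonneg_right (hmin k hkneg) (by linarith)
          _ = p.1 k := div_mul_cancel₀ _ hnek
      show 0 ≤ p.1 k + t * V k
      nlinarith
  have hw'supp : ∀ k, p.1 k = 0 → w' k = 0 := by
    intro k hk
    simp only [hw', hk, hVsupp k hk]
    ring
  have hsum : ∀ f : α → ℝ, (∑ k, V k * f (p.2 k) = 0) →
      ∑ k, w' k * f (p.2 k) = ∑ k, p.1 k * f (p.2 k) := by
    intro f hf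
    simp only [hw', add_mul, Finset.sum_add_distrib]
    have : ∑ k, t * V k * f (p.2 k) = t * ∑ k, V k * f (p.2 k) := by
      rw [Finset.mul_sum]
      exact Finset.sum_congr rfl fun k _ => by ring
    rw [this, hf]
    ring
  set q : (Fin K → ℝ) × (Fin K → α) := (w', p.2) with hq
  have hqok : okU ϑ φ μm A q := by
    refine ⟨hw'nonneg, ?_, ?_, fun n => ?_⟩
    · have : ∑ k, w' k = ∑ k, p.1 k + t * ∑ k, V k := by
        simp only [hw', Finset.sum_add_distrib, Finset.mul_sum]
      rw [this, hV1, hp.2.1]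
      ring
    · have : ∑ k, w' k * ϑ (p.2 k) = ∑ k, p.1 k * ϑ (p.2 k) + t * ∑ k, V k * ϑ (p.2 k) := by
        simp only [hw', add_mul, Finset.sum_add_distrib, Finset.mul_sum]
        congr 1
        exact Finset.sum_congr rfl fun k _ => by ring
      rw [this]
      nlinarith [hp.2.2.1]
    · rw [hsum (φ n) (hVφ n)]
      exact hp.2.2.2 n
  have hqc : cost c q = cost c p := hsum c hVc
  have hsub : wsupp w' ⊆ wsupp p.1 := by
    intro k hk
    rw [mem_wsupp] at hk ⊢
    intro h
    exact hk (hw'supp k h)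
  refine ⟨q, ⟨?_, hqc⟩, hqok, rfl, hsub, ?_⟩
  · intro s hs
    have hseg := segW c ϑ φ μm A hp hqok rfl s hs
    refine ⟨hseg.1, ?_⟩
    rw [hseg.2, hqc]
  · apply Finset.card_lt_card
    refine ⟨hsub, fun hss => ?_⟩
    have hm1 : m ∈ wsupp p.1 := by
      rw [mem_wsupp]
      intro h
      rw [hVsupp m h] at hVm
      exact lt_irrefl 0 hVm
    have := hss hm1
    rw [mem_wsupp] at this
    exact this hw'm

/-- iterated reduction to a support of size at most N+2 -/
lemma reduce : ∀ (m : ℕ) (p : (Fin K → ℝ) × (Fin K → α)), okU ϑ φ μm A p →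
    (wsupp p.1).card ≤ m →
    ∃ q, Relation.ReflTransGen (SegEq c ϑ φ μm A) p q ∧ okU ϑ φ μm A q ∧
      q.2 = p.2 ∧ (wsupp q.1).card ≤ N + 2 := by
  intro m
  induction m with
  | zero =>
    intro p hp hc
    exact ⟨p, Relation.ReflTransGen.refl, hp, rfl, by omega⟩
  | succ m ih =>
    intro p hp hc
    by_cases h : (wsupp p.1).card ≤ N + 2
    · exact ⟨p, Relation.ReflTransGen.refl, hp, rfl, h⟩
    · obtain ⟨q, hseg, hq, hq2, _, hlt⟩ := reduce_step c ϑ φ μm A hp (by omega)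
      obtain ⟨r, hr, hrok, hr2, hrc⟩ := ih q hq (by omega)
      exact ⟨r, Relation.ReflTransGen.head hseg hr, hrok, hr2.trans hq2, hrc⟩


open scoped Classical in
/-- move the support of a small-support configuration into a target slot set `T` -/
lemma move_into (T : Finset (Fin K)) (hT : N + 2 < T.card) :
    ∀ (n : ℕ) (p : (Fin K → ℝ) × (Fin K → α)), okU ϑ φ μm A p →
    (wsupp p.1).card ≤ N + 2 → ((wsupp p.1) \ T).card ≤ n →
    ∃ q, Relation.ReflTransGen (SegEq c ϑ φ μm A) p q ∧ okU ϑ φ μm A q ∧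
      wsupp q.1 ⊆ T := by
  intro n
  induction n with
  | zero =>
    intro p hp hcard hdiff
    refine ⟨p, Relation.ReflTransGen.refl, hp, ?_⟩
    rw [← Finset.sdiff_eq_empty_iff_subset]
    exact Finset.card_eq_zero.mp (by omega)
  | succ n ih =>
    intro p hp hcard hdiff
    by_cases hsub : wsupp p.1 ⊆ T
    · exact ⟨p, Relation.ReflTransGen.refl, hp, hsub⟩
    · -- pick a bad atom i and a free slot j in T
      have hine : ((wsupp p.1) \ T).Nonempty := by
        rw [Finset.sdiff_nonempty]
        exact hsub
      obtain ⟨i, hi⟩ := hine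
      obtain ⟨his, hit⟩ := Finset.mem_sdiff.mp hi
      have hjne : (T \ (wsupp p.1)).Nonempty := by
        rw [← Finset.card_pos]
        have := Finset.le_card_sdiff (wsupp p.1) T
        omega
      obtain ⟨j, hj⟩ := hjne
      obtain ⟨hjT, hjs⟩ := Finset.mem_sdiff.mp hj
      have hpj : p.1 j = 0 := by
        by_contra h
        exact hjs (mem_wsupp.mpr h)
      have hij : i ≠ j := fun h => hjs (h ▸ his)
      -- step 1 : move the position of the empty slot j
      set p' : (Fin K → ℝ) × (Fin K → α) := (p.1, Function.update p.2 j (p.2 i)) with hp'def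
      have hfix : ∀ k, p.1 k ≠ 0 → p.2 k = p'.2 k := by
        intro k hk
        have hkj : k ≠ j := fun h => hk (h ▸ hpj)
        show p.2 k = Function.update p.2 j (p.2 i) k
        rw [Function.update_of_ne hkj]
      obtain ⟨hseg1, hp'ok⟩ := segX c ϑ φ μm A (q := p') hp rfl hfix
      -- step 2 : transfer the weight of atom i to slot j
      have hX : p'.2 i = p'.2 j := by
        show Function.update p.2 j (p.2 i) i = Function.update p.2 j (p.2 i) j
        rw [Function.update_of_ne hij, Function.update_self]
      set q' : (Fin K → ℝ) × (Fin K → α) :=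
        (Function.update (Function.update p'.1 i 0) j (p'.1 i), p'.2) with hq'def
      obtain ⟨hseg2, hq'ok, hout, hq'i, hq'j⟩ :=
        seg_transfer c ϑ φ μm A (p := p') (q := q') hp'ok hij (show p'.1 j = 0 from hpj) hX hq'def
      -- support bookkeeping
      have hsupp : wsupp q'.1 ⊆ insert j ((wsupp p.1).erase i) := by
        intro k hk
        rw [mem_wsupp] at hk
        by_cases hkj : k = j
        · rw [hkj]; exact Finset.mem_insert_self j _
        · by_cases hki : k = i
          · rw [hki] at hk; exact absurd hq'i hk
          · have : q'.1 k = p.1 k := hout k hki hkj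
            apply Finset.mem_insert_of_mem
            exact Finset.mem_erase.mpr ⟨hki, mem_wsupp.mpr (this ▸ hk)⟩
      have hcard' : (wsupp q'.1).card ≤ N + 2 := by
        have h1 := Finset.card_le_card hsupp
        have h2 := Finset.card_insert_le j ((wsupp p.1).erase i)
        have h3 := Finset.card_erase_of_mem his
        have h4 : 1 ≤ (wsupp p.1).card := Finset.card_pos.mpr ⟨i, his⟩
        omega
      have hdiff' : ((wsupp q'.1) \ T).card ≤ n := by
        have hss : (wsupp q'.1) \ T ⊆ ((wsupp p.1) \ T).erase i := by
          intro k hk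
          obtain ⟨hk1, hk2⟩ := Finset.mem_sdiff.mp hk
          have := hsupp hk1
          rcases Finset.mem_insert.mp this with h | h
          · exact absurd (h ▸ hjT) hk2
          · obtain ⟨hki, hkp⟩ := Finset.mem_erase.mp h
            exact Finset.mem_erase.mpr ⟨hki, Finset.mem_sdiff.mpr ⟨hkp, hk2⟩⟩
        have h1 := Finset.card_le_card hss
        have h2 := Finset.card_erase_of_mem hi
        omega
      obtain ⟨r, hr, hrok, hrT⟩ := ih q' hq'ok hcard' hdiff'
      exact ⟨r, Relation.ReflTransGen.head hseg1 (Relation.ReflTransGen.head hseg2 hr),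
        hrok, hrT⟩


/-- symmetry of valid segments -/
lemma seg_symm {p q : (Fin K → ℝ) × (Fin K → α)} (h : Seg c ϑ φ μm A p q) :
    Seg c ϑ φ μm A q p := by
  intro s hs
  obtain ⟨hs0, hs1⟩ := hs
  have h' := h (1 - s) ⟨by linarith, by linarith⟩
  have he : (1 - s) • q + s • p = (1 - (1 - s)) • p + (1 - s) • q := by
    rw [show (1:ℝ) - (1 - s) = s by ring]
    exact add_comm _ _
  rw [he]
  exact ⟨h'.1, by rw [h'.2]; ring⟩

lemma segEq_symm : Symmetric (SegEq c ϑ φ μm A (K := K)) := by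
  intro p q h
  exact ⟨seg_symm c ϑ φ μm A h.1, by rw [h.2]⟩

lemma rtg_cost {p q : (Fin K → ℝ) × (Fin K → α)}
    (h : Relation.ReflTransGen (SegEq c ϑ φ μm A) p q) : cost c q = cost c p := by
  induction h with
  | refl => rfl
  | tail _ hbc ih => rw [hbc.2, ih]

end Concrete

theorem main (d M N K : ℕ) (hK : 2 * N + 6 ≤ K)
    (c ϑ : (Fin M → Fin d → ℝ) → ℝ)
    (φ : Fin N → (Fin M → Fin d → ℝ) → ℝ) (μm : Fin N → ℝ)
    (A : ℝ)
    (U : Set ((Fin K → ℝ) × (Fin K → Fin M → Fin d → ℝ)))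
    (hU : U = {p | (∀ k, 0 ≤ p.1 k) ∧ (∑ k, p.1 k = 1) ∧
      (∑ k, p.1 k * ϑ (p.2 k) ≤ A) ∧ ∀ n, ∑ k, p.1 k * φ n (p.2 k) = μm n})
    (I : ((Fin K → ℝ) × (Fin K → Fin M → Fin d → ℝ)) → ℝ)
    (hI : I = fun p => ∑ k, p.1 k * c (p.2 k))
    (P₀ P₁ : (Fin K → ℝ) × (Fin K → Fin M → Fin d → ℝ))
    (h₀ : P₀ ∈ U) (h₁ : P₁ ∈ U) :
    ∃ ψ : ℝ → (Fin K → ℝ) × (Fin K → Fin M → Fin d → ℝ),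
      ContinuousOn ψ (Set.Icc 0 1) ∧
      ψ 0 = P₀ ∧ ψ 1 = P₁ ∧
      (∀ t ∈ Set.Icc (0:ℝ) 1, ψ t ∈ U) ∧
      (∃ (L : ℕ) (τ : Fin (L + 1) → ℝ), Monotone τ ∧ τ 0 = 0 ∧ τ (Fin.last L) = 1 ∧
        ∀ i : Fin L, ∀ s ∈ Set.Icc (0:ℝ) 1,
          ψ ((1 - s) * τ i.castSucc + s * τ i.succ)
            = (1 - s) • ψ (τ i.castSucc) + s • ψ (τ i.succ)) ∧
      (MonotoneOn (fun t => I (ψ t)) (Set.Icc 0 1) ∨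
        AntitoneOn (fun t => I (ψ t)) (Set.Icc 0 1)) := by
  classical
  subst hU hI
  have h₀' : okU ϑ φ μm A P₀ := h₀
  have h₁' : okU ϑ φ μm A P₁ := h₁
  -- reduce P₀
  obtain ⟨p₀, hC₀, h₀ok, h₀pos, h₀card⟩ :=
    reduce c ϑ φ μm A ((wsupp P₀.1).card) P₀ h₀' le_rfl
  -- target slot set
  set S₀ := wsupp p₀.1 with hS₀
  set T : Finset (Fin K) := S₀ᶜ with hT
  have hTcard : N + 2 < T.card := by
    have h1 : T.card = K - S₀.card := by
      rw [hT, Finset.card_compl, Fintype.card_fin]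
    omega
  -- reduce P₁ then move its support into T
  obtain ⟨p₁, hC₁, h₁ok, h₁pos, h₁card⟩ :=
    reduce c ϑ φ μm A ((wsupp P₁.1).card) P₁ h₁' le_rfl
  obtain ⟨p₂, hC₂, h₂ok, h₂T⟩ :=
    move_into c ϑ φ μm A T hTcard ((wsupp p₁.1 \ T).card) p₁ h₁ok h₁card le_rfl
  -- common positions
  set Xs : Fin K → (Fin M → Fin d → ℝ) := fun k => if k ∈ S₀ then p₀.2 k else p₂.2 k with hXs
  set q₀ : (Fin K → ℝ) × (Fin K → Fin M → Fin d → ℝ) := (p₀.1, Xs) with hq₀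
  set q₁ : (Fin K → ℝ) × (Fin K → Fin M → Fin d → ℝ) := (p₂.1, Xs) with hq₁
  obtain ⟨hseg₀, hq₀ok⟩ := segX c ϑ φ μm A (q := q₀) h₀ok rfl (by
    intro k hk
    show p₀.2 k = if k ∈ S₀ then p₀.2 k else p₂.2 k
    rw [if_pos (show k ∈ S₀ from mem_wsupp.mpr hk)])
  obtain ⟨hseg₁, hq₁ok⟩ := segX c ϑ φ μm A (q := q₁) h₂ok rfl (by
    intro k hk
    show p₂.2 k = if k ∈ S₀ then p₀.2 k else p₂.2 k
    have hkT : k ∈ T := h₂T (mem_wsupp.mpr hk)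
    have hns : k ∉ S₀ := by
      rw [hT, Finset.mem_compl] at hkT
      exact hkT
    rw [if_neg hns])
  have hmid : Seg c ϑ φ μm A q₀ q₁ := segW c ϑ φ μm A hq₀ok hq₁ok rfl
  -- full SegEq chains
  have C₀ : Relation.ReflTransGen (SegEq c ϑ φ μm A) P₀ q₀ := hC₀.tail hseg₀
  have C₁ : Relation.ReflTransGen (SegEq c ϑ φ μm A) P₁ q₁ :=
    ((hC₁.trans hC₂).tail hseg₁)
  have hcost₀ : cost c q₀ = cost c P₀ := rtg_cost c ϑ φ μm A C₀
  have hcost₁ : cost c q₁ = cost c P₁ := rtg_cost c ϑ φ μm A C₁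
  have hrefl₁ : Seg c ϑ φ μm A P₁ P₁ := segW c ϑ φ μm A h₁' h₁' rfl
  rcases le_total (cost c P₀) (cost c P₁) with hc | hc
  · -- monotone case
    set R : ((Fin K → ℝ) × (Fin K → Fin M → Fin d → ℝ)) →
        ((Fin K → ℝ) × (Fin K → Fin M → Fin d → ℝ)) → Prop :=
      fun p q => Seg c ϑ φ μm A p q ∧ cost c p ≤ cost c q with hR
    have hmono : ∀ {a b}, SegEq c ϑ φ μm A a b → R a b :=
      fun h => ⟨h.1, h.2.ge⟩
    have full : Relation.ReflTransGen R P₀ P₁ :=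
      ((Relation.ReflTransGen.mono (fun _ _ h => hmono h) _ _ C₀).trans
        (Relation.ReflTransGen.single ⟨hmid, by rw [hcost₀, hcost₁]; exact hc⟩)).trans
        (Relation.ReflTransGen.mono (fun _ _ h => hmono h) _ _
          (haveI : Std.Symm (SegEq c ϑ φ μm A (K := K)) := ⟨fun _ _ h => segEq_symm c ϑ φ μm A h⟩; Std.Symm.symm _ _ C₁))
    obtain ⟨n, f, hf0, hfl, hstep⟩ := rtg_seq full
    obtain ⟨f', hf0', hfl', hstep'⟩ := snoc_step hf0 hfl hstep ⟨hrefl₁, le_refl _⟩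
    obtain ⟨ψ, hcont, hψ0, hψ1, hmem, hpoly, hmono'⟩ :=
      assemble {p : (Fin K → ℝ) × (Fin K → Fin M → Fin d → ℝ) |
          (∀ k, 0 ≤ p.1 k) ∧ (∑ k, p.1 k = 1) ∧
          (∑ k, p.1 k * ϑ (p.2 k) ≤ A) ∧ ∀ n, ∑ k, p.1 k * φ n (p.2 k) = μm n}
        (cost c) (n + 1) (by omega) f'
        (fun i s hs => ⟨((hstep' i).1 s hs).1, ((hstep' i).1 s hs).2⟩)
        (Or.inl fun i => (hstep' i).2)
    exact ⟨ψ, hcont, by rw [hψ0, hf0'], by rw [hψ1, hfl'], hmem, hpoly, hmono'⟩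
  · -- antitone case
    set R : ((Fin K → ℝ) × (Fin K → Fin M → Fin d → ℝ)) →
        ((Fin K → ℝ) × (Fin K → Fin M → Fin d → ℝ)) → Prop :=
      fun p q => Seg c ϑ φ μm A p q ∧ cost c q ≤ cost c p with hR
    have hmono : ∀ {a b}, SegEq c ϑ φ μm A a b → R a b :=
      fun h => ⟨h.1, h.2.le⟩
    have full : Relation.ReflTransGen R P₀ P₁ :=
      ((Relation.ReflTransGen.mono (fun _ _ h => hmono h) _ _ C₀).trans
        (Relation.ReflTransGen.single ⟨hmid, by rw [hcost₀, hcost₁]; exact hc⟩)).trans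
        (Relation.ReflTransGen.mono (fun _ _ h => hmono h) _ _
          (haveI : Std.Symm (SegEq c ϑ φ μm A (K := K)) := ⟨fun _ _ h => segEq_symm c ϑ φ μm A h⟩; Std.Symm.symm _ _ C₁))
    obtain ⟨n, f, hf0, hfl, hstep⟩ := rtg_seq full
    obtain ⟨f', hf0', hfl', hstep'⟩ := snoc_step hf0 hfl hstep ⟨hrefl₁, le_refl _⟩
    obtain ⟨ψ, hcont, hψ0, hψ1, hmem, hpoly, hmono'⟩ :=
      assemble {p : (Fin K → ℝ) × (Fin K → Fin M → Fin d → ℝ) |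
          (∀ k, 0 ≤ p.1 k) ∧ (∑ k, p.1 k = 1) ∧
          (∑ k, p.1 k * ϑ (p.2 k) ≤ A) ∧ ∀ n, ∑ k, p.1 k * φ n (p.2 k) = μm n}
        (cost c) (n + 1) (by omega) f'
        (fun i s hs => ⟨((hstep' i).1 s hs).1, ((hstep' i).1 s hs).2⟩)
        (Or.inr fun i => (hstep' i).2)
    exact ⟨ψ, hcont, by rw [hψ0, hf0'], by rw [hψ1, hfl'], hmem, hpoly, hmono'⟩

end MCOTPath


/-- Theorem 2.3 (monotone polygonal path): if `K ≥ 2N + 6`, any two elements of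
the constraint set `𝒰_K^N` can be joined by a continuous polygonal path inside
`𝒰_K^N` along which the cost `ℐ(W,Y) = Σ_k w_k c(X^k)` is monotone. -/
theorem mcot_monotone_path (d M N K : ℕ) (hK : 2 * N + 6 ≤ K)
    (c ϑ : (Fin M → Fin d → ℝ) → ℝ)
    (hc : ∀ X, 0 ≤ c X) (hϑ : ∀ X, 0 ≤ ϑ X)
    (φ : Fin N → (Fin M → Fin d → ℝ) → ℝ) (μm : Fin N → ℝ)
    (A : ℝ) (hA : 0 < A)
    (U : Set ((Fin K → ℝ) × (Fin K → Fin M → Fin d → ℝ)))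
    (hU : U = {p | (∀ k, 0 ≤ p.1 k) ∧ (∑ k, p.1 k = 1) ∧
      (∑ k, p.1 k * ϑ (p.2 k) ≤ A) ∧ ∀ n, ∑ k, p.1 k * φ n (p.2 k) = μm n})
    (I : ((Fin K → ℝ) × (Fin K → Fin M → Fin d → ℝ)) → ℝ)
    (hI : I = fun p => ∑ k, p.1 k * c (p.2 k))
    (P₀ P₁ : (Fin K → ℝ) × (Fin K → Fin M → Fin d → ℝ))
    (h₀ : P₀ ∈ U) (h₁ : P₁ ∈ U) :
    ∃ ψ : ℝ → (Fin K → ℝ) × (Fin K → Fin M → Fin d → ℝ),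
      ContinuousOn ψ (Set.Icc 0 1) ∧
      ψ 0 = P₀ ∧ ψ 1 = P₁ ∧
      (∀ t ∈ Set.Icc (0:ℝ) 1, ψ t ∈ U) ∧
      -- ψ is a polygonal chain
      (∃ (L : ℕ) (τ : Fin (L + 1) → ℝ), Monotone τ ∧ τ 0 = 0 ∧ τ (Fin.last L) = 1 ∧
        ∀ i : Fin L, ∀ s ∈ Set.Icc (0:ℝ) 1,
          ψ ((1 - s) * τ i.castSucc + s * τ i.succ)
            = (1 - s) • ψ (τ i.castSucc) + s • ψ (τ i.succ)) ∧
      (MonotoneOn (fun t => I (ψ t)) (Set.Icc 0 1) ∨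
        AntitoneOn (fun t => I (ψ t)) (Set.Icc 0 1)) := by
  exact MCOTPath.main d M N K hK c ϑ φ μm A U hU I hI P₀ P₁ h₀ h₁
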